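/- Let G = (V, E) be a graph with m edges, let x* ∈ {-1,1}^V be an assignment cutting OPT edges (i.e., OPT = |{(u,v) ∈ E : x*_u ≠ x*_v}|), and let (Y_v)_{v∈V} be independent ±1-valued random variables with Pr[Y_v = x*_v] = 1/2 + ε for ε ∈ (0, 1/2]. Let X = |{(u,v) ∈ E : Y_u ≠ Y_v}|. Then E[X] = (1/2 − 2ε²)m + 4ε²·OPT. In particular, if OPT ≤ m, then E[X] ≥ (1/2 + 2ε²)·OPT. -/

import Mathlib

open MeasureTheory ProbabilityTheory

theorem stmt6 {V Ω : Type*} [Fintype V] [DecidableEq V]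
    [MeasurableSpace Ω] (μ : Measure Ω) [IsProbabilityMeasure μ]
    (G : SimpleGraph V) [DecidableRel G.Adj]
    (ε : ℝ) (hε0 : 0 < ε) (hε : ε ≤ 1/2)
    (xstar : V → ℤ) (hx : ∀ v, xstar v = 1 ∨ xstar v = -1)
    (Y : V → Ω → ℤ) (hYmeas : ∀ v, Measurable (Y v))
    (hYval : ∀ v ω, Y v ω = 1 ∨ Y v ω = -1)
    (hind : iIndepFun Y μ)
    (hacc : ∀ v, μ {ω | Y v ω = xstar v} = ENNReal.ofReal (1/2 + ε))
    (m OPT : ℕ)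
    (hm : m = G.edgeFinset.card)
    (hOPT : OPT = (G.edgeFinset.filter (fun e => ¬ (e.map xstar).IsDiag)).card)
    (X : Ω → ℝ)
    (hX : ∀ ω, X ω =
      ((G.edgeFinset.filter (fun e => ¬ (e.map (fun v => Y v ω)).IsDiag)).card : ℝ)) :
    (∫ ω, X ω ∂μ) = (1/2 - 2 * ε^2) * m + 4 * ε^2 * OPT ∧
      ((OPT : ℝ) ≤ m → (1/2 + 2 * ε^2) * OPT ≤ ∫ ω, X ω ∂μ) := by
  classical
  have hmeas1 : ∀ (w : V) (c : ℤ), MeasurableSet (Y w ⁻¹' {c}) :=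
    fun w c => hYmeas w (measurableSet_singleton c)
  have hsA : ∀ w, (μ (Y w ⁻¹' {xstar w})).toReal = 1/2 + ε := by
    intro w
    have h : Y w ⁻¹' {xstar w} = {ω | Y w ω = xstar w} := rfl
    rw [h, hacc w, ENNReal.toReal_ofReal (by linarith)]
  have hsB : ∀ w, (μ (Y w ⁻¹' {-xstar w})).toReal = 1/2 - ε := by
    intro w
    have hcompl : Y w ⁻¹' {-xstar w} = (Y w ⁻¹' {xstar w})ᶜ := by
      ext ω
      rcases hYval w ω with h | h <;> rcases hx w with h' | h' <;>
        simp [Set.mem_preimage, h, h']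
    rw [hcompl, measure_compl (hmeas1 w _) (measure_ne_top μ _), measure_univ,
      ENNReal.toReal_sub_of_le prob_le_one ENNReal.one_ne_top, ENNReal.toReal_one, hsA w]
    ring
  have pv : ∀ (w : V) (c : ℤ), c = 1 ∨ c = -1 →
      (μ (Y w ⁻¹' {c})).toReal = if c = xstar w then 1/2 + ε else 1/2 - ε := by
    intro w c hc
    by_cases h : c = xstar w
    · rw [if_pos h, h, hsA w]
    · have hcc : c = -xstar w := by rcases hc with h1 | h1 <;> rcases hx w with h2 | h2 <;> omega
      rw [if_neg h, hcc, hsB w]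
  have hmeasNe : ∀ u v : V, MeasurableSet {ω | Y u ω ≠ Y v ω} :=
    fun u v => (measurableSet_eq_fun (hYmeas u) (hYmeas v)).compl
  have key : ∀ u v : V, u ≠ v →
      (μ {ω | Y u ω ≠ Y v ω}).toReal =
        1/2 - 2*ε^2 + (if xstar u = xstar v then 0 else 4*ε^2) := by
    intro u v huv
    have hset : {ω | Y u ω ≠ Y v ω} =
        (Y u ⁻¹' {1} ∩ Y v ⁻¹' {-1}) ∪ (Y u ⁻¹' {-1} ∩ Y v ⁻¹' {1}) := by
      ext ω
      rcases hYval u ω with h1 | h1 <;> rcases hYval v ω with h2 | h2 <;>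
        simp [h1, h2]
    have hdisj : Disjoint (Y u ⁻¹' {1} ∩ Y v ⁻¹' {-1}) (Y u ⁻¹' {-1} ∩ Y v ⁻¹' {1}) := by
      rw [Set.disjoint_left]
      rintro ω ⟨h1, _⟩ ⟨h2, _⟩
      simp at h1 h2
      omega
    have hind2 := hind.indepFun huv
    have e1 := hind2.measure_inter_preimage_eq_mul {1} {-1}
      (measurableSet_singleton _) (measurableSet_singleton _)
    have e2 := hind2.measure_inter_preimage_eq_mul {-1} {1}
      (measurableSet_singleton _) (measurableSet_singleton _)
    rw [hset, measure_union hdisj ((hmeas1 u _).inter (hmeas1 v _)),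
      ENNReal.toReal_add (by rw [e1]; exact ENNReal.mul_ne_top (measure_ne_top μ _) (measure_ne_top μ _))
        (by rw [e2]; exact ENNReal.mul_ne_top (measure_ne_top μ _) (measure_ne_top μ _)),
      e1, e2, ENNReal.toReal_mul, ENNReal.toReal_mul,
      pv u 1 (Or.inl rfl), pv v (-1) (Or.inr rfl), pv u (-1) (Or.inr rfl), pv v 1 (Or.inl rfl)]
    rcases hx u with h1 | h1 <;> rcases hx v with h2 | h2 <;> simp [h1, h2] <;> ring
  have hX2 : ∀ ω, X ω = ∑ e ∈ G.edgeFinset,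
      (if ¬ (e.map (fun v => Y v ω)).IsDiag then (1:ℝ) else 0) := by
    intro ω
    rw [hX ω, Finset.card_filter, Nat.cast_sum]
    refine Finset.sum_congr rfl fun e _ => ?_
    split_ifs <;> simp
  have hint : ∀ e ∈ G.edgeFinset,
      Integrable (fun ω => if ¬ (e.map (fun v => Y v ω)).IsDiag then (1:ℝ) else 0) μ := by
    intro e he
    induction e using Sym2.ind with
    | _ u v =>
      have hfun : (fun ω => if ¬ ((s(u,v) : Sym2 V).map (fun v => Y v ω)).IsDiag then (1:ℝ) else 0)
          = Set.indicator {ω | Y u ω ≠ Y v ω} (fun _ => 1) := by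
        ext ω
        simp [Sym2.map_pair_eq, Sym2.mk_isDiag_iff, Set.indicator_apply, Set.mem_setOf_eq]
      rw [hfun]
      exact (integrable_const (1:ℝ)).indicator (hmeasNe u v)
  have hmain : (∫ ω, X ω ∂μ) = (1/2 - 2 * ε^2) * m + 4 * ε^2 * OPT := by
    calc ∫ ω, X ω ∂μ
        = ∑ e ∈ G.edgeFinset, ∫ ω, (if ¬ (e.map (fun v => Y v ω)).IsDiag then (1:ℝ) else 0) ∂μ := by
          rw [integral_congr_ae (Filter.Eventually.of_forall hX2)]
          exact integral_finset_sum _ hint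
      _ = ∑ e ∈ G.edgeFinset, (1/2 - 2*ε^2 + (if ¬ (e.map xstar).IsDiag then 4*ε^2 else 0)) := by
          refine Finset.sum_congr rfl fun e he => ?_
          induction e using Sym2.ind with
          | _ u v =>
            have huv : u ≠ v := G.ne_of_adj ((SimpleGraph.mem_edgeSet G).mp (SimpleGraph.mem_edgeFinset.mp he))
            have hfun : (fun ω => if ¬ ((s(u,v) : Sym2 V).map (fun v => Y v ω)).IsDiag then (1:ℝ) else 0)
                = Set.indicator {ω | Y u ω ≠ Y v ω} (fun _ => 1) := by
              ext ω
              simp [Sym2.map_pair_eq, Sym2.mk_isDiag_iff, Set.indicator_apply, Set.mem_setOf_eq]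
            rw [hfun, integral_indicator_const (1:ℝ) (hmeasNe u v), smul_eq_mul, mul_one, measureReal_def,
              key u v huv, Sym2.map_pair_eq]
            by_cases h : xstar u = xstar v <;> simp [h, Sym2.mk_isDiag_iff]
      _ = (1/2 - 2 * ε^2) * m + 4 * ε^2 * OPT := by
          rw [Finset.sum_add_distrib, Finset.sum_const, ← Finset.sum_filter, Finset.sum_const,
            hm, hOPT]
          simp [nsmul_eq_mul]
          ring
  refine ⟨hmain, fun h => ?_⟩
  rw [hmain]
  nlinarith [mul_nonneg (by nlinarith : (0:ℝ) ≤ 1/2 - 2*ε^2) (by linarith : (0:ℝ) ≤ (m:ℝ) - OPT)]
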